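/- Let a(t) be the integer whose Elias ω-codeword is the unique prefix of the infinite string Bin(t)^R 000... lying in the code book. Then for every positive integer k, the integer k appears in the sequence (a(t)) periodically with period 2^{|Code(k)|}; consequently, every interval I ⊆ ℕ of width 2^{|Code(k)|} satisfies {1,...,k} ⊆ {a(t) : t ∈ I}, using that |Code(k')| ≤ |Code(k)| for 1 ≤ k' ≤ k. -/

import Mathlib

/-- Big-endian binary representation of a positive integer (length `1 + ⌊log₂ N⌋`). -/
def bin (N : ℕ) : List Bool := (Nat.bits N).reverse

/-- The body of Elias's ω-code. -/
def pre : ℕ → List Bool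
  | 0 => []
  | 1 => []
  | n + 2 => pre (Nat.log 2 (n + 2)) ++ bin (n + 2)
  decreasing_by
    exact Nat.log_lt_self 2 (by omega)

/-- Elias's ω-code. -/
def code (N : ℕ) : List Bool := pre N ++ [false]

/-- `l` is a prefix of the infinite bit-string `Bin(t)^R 000⋯`, i.e. of the bits of `t`
read from the least significant bit, padded with `0`s. -/
def IsPrefixOfStream (l : List Bool) (t : ℕ) : Prop :=
  ∀ i (h : i < l.length), l.get ⟨i, h⟩ = Nat.testBit t i

/-! ### bin basics -/

lemma size_eq_log (n : ℕ) (hn : 0 < n) : Nat.size n = Nat.log 2 n + 1 := by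
  have h1 : Nat.size n ≤ Nat.log 2 n + 1 :=
    Nat.size_le.mpr (Nat.lt_pow_succ_log_self (by norm_num) n)
  have h2 : Nat.log 2 n < Nat.size n :=
    Nat.lt_size.mpr (Nat.pow_log_le_self 2 hn.ne')
  omega

lemma bin_length (n : ℕ) (hn : 0 < n) : (bin n).length = Nat.log 2 n + 1 := by
  simp [bin, Nat.size_eq_bits_len, size_eq_log n hn]

lemma testBit_eq_bits_get (n i : ℕ) (h : i < (Nat.bits n).length) :
    Nat.testBit n i = (Nat.bits n).get ⟨i, h⟩ := by
  rw [Nat.testBit_eq_inth, List.getI_eq_getElem _ h, List.get_eq_getElem]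

lemma testBit_log_self (n : ℕ) (hn : 0 < n) : Nat.testBit n (Nat.log 2 n) = true := by
  rw [Nat.testBit_eq_decide_div_mod_eq]
  have h1 : 2 ^ Nat.log 2 n ≤ n := Nat.pow_log_le_self 2 hn.ne'
  have h2 : n < 2 ^ (Nat.log 2 n + 1) := Nat.lt_pow_succ_log_self (by norm_num) n
  have h3 : (0:ℕ) < 2 ^ Nat.log 2 n := Nat.two_pow_pos _
  have : n / 2 ^ Nat.log 2 n = 1 :=
    Nat.div_eq_of_lt_le (by omega) (by rw [pow_succ] at h2; omega)
  simp [this]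

lemma bin_get (n : ℕ) (hn : 0 < n) (i : ℕ) (h : i < (bin n).length) :
    (bin n)[i] = Nat.testBit n (Nat.log 2 n - i) := by
  have hb : (Nat.bits n).length = Nat.log 2 n + 1 := by
    rw [Nat.size_eq_bits_len, size_eq_log n hn]
  have h' : i < (Nat.bits n).length := by
    simpa [bin] using h
  simp only [bin] at h ⊢
  rw [List.getElem_reverse, testBit_eq_bits_get n (Nat.log 2 n - i) (by omega),
    List.get_eq_getElem]
  congr 1
  simp only [Fin.val_mk]
  omega

lemma bin_head (n : ℕ) (hn : 0 < n) (h : 0 < (bin n).length) :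
    (bin n)[0] = true := by
  rw [bin_get n hn 0 h]
  simpa using testBit_log_self n hn

lemma bin_pos (n : ℕ) (hn : 0 < n) : 0 < (bin n).length := by
  rw [bin_length n hn]; omega

lemma bin_inj {m n : ℕ} (h : bin m = bin n) : m = n := by
  have hb : Nat.bits m = Nat.bits n := by
    have := congrArg List.reverse h
    simpa [bin] using this
  exact Nat.eq_of_testBit_eq (fun i => by rw [Nat.testBit_eq_inth, Nat.testBit_eq_inth, hb])

/-! ### pre basics -/

lemma pre_eq {n : ℕ} (hn : 2 ≤ n) : pre n = pre (Nat.log 2 n) ++ bin n := by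
  obtain ⟨m, rfl⟩ : ∃ m, n = m + 2 := ⟨n - 2, by omega⟩
  rw [pre]

lemma pre_length {n : ℕ} (hn : 2 ≤ n) :
    (pre n).length = (pre (Nat.log 2 n)).length + (Nat.log 2 n + 1) := by
  rw [pre_eq hn, List.length_append, bin_length n (by omega)]

lemma pre_eq_nil {n : ℕ} (hn : 1 ≤ n) (h : (pre n).length = 0) : n = 1 := by
  by_contra hne
  have h2 : 2 ≤ n := by omega
  rw [pre_length h2] at h
  omega

lemma log2_pos {n : ℕ} (hn : 2 ≤ n) : 1 ≤ Nat.log 2 n := Nat.log_pos (by norm_num) hn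

lemma pre_length_mono : ∀ m n : ℕ, 1 ≤ m → m ≤ n → (pre m).length ≤ (pre n).length := by
  intro m
  induction m using Nat.strong_induction_on with
  | _ m ih =>
    intro n hm hmn
    rcases eq_or_lt_of_le hm with h1 | h2
    · simp [← h1, pre]
    · have hm2 : 2 ≤ m := h2
      have hn2 : 2 ≤ n := le_trans hm2 hmn
      rw [pre_length hm2, pre_length hn2]
      have hlog : Nat.log 2 m ≤ Nat.log 2 n := Nat.log_mono_right hmn
      have := ih (Nat.log 2 m) (Nat.log_lt_self 2 (by omega)) (Nat.log 2 n)
        (log2_pos hm2) hlog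
      omega

/-! ### prefix-of-stream basics -/

lemma stream_of_prefix {l₁ l₂ : List Bool} {t : ℕ} (h : IsPrefixOfStream l₂ t)
    (hp : l₁ <+: l₂) : IsPrefixOfStream l₁ t := by
  obtain ⟨s, rfl⟩ := hp
  intro i hi
  have hi2 : i < (l₁ ++ s).length := by simp; omega
  have := h i hi2
  rw [List.get_eq_getElem] at this ⊢
  rwa [List.getElem_append_left hi] at this

lemma stream_getElem {l : List Bool} {t : ℕ} (h : IsPrefixOfStream l t)
    (i : ℕ) (hi : i < l.length) : l[i] = Nat.testBit t i := by
  have := h i hi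
  rwa [List.get_eq_getElem] at this

/-! ### the decode chain -/

def chain : ℕ → List ℕ
  | 0 => [0]
  | 1 => [1]
  | n + 2 => (n + 2) :: chain (Nat.log 2 (n + 2))
  decreasing_by
    exact Nat.log_lt_self 2 (by omega)

lemma chain_eq {n : ℕ} (hn : 2 ≤ n) : chain n = n :: chain (Nat.log 2 n) := by
  obtain ⟨m, rfl⟩ : ∃ m, n = m + 2 := ⟨n - 2, by omega⟩
  rw [chain]

lemma self_mem_chain (n : ℕ) : n ∈ chain n := by
  match n with
  | 0 => simp [chain]
  | 1 => simp [chain]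
  | n + 2 => rw [chain_eq (by omega)]; exact List.mem_cons_self

lemma one_mem_chain : ∀ n : ℕ, 1 ≤ n → 1 ∈ chain n := by
  intro n
  induction n using Nat.strong_induction_on with
  | _ n ih =>
    intro hn
    rcases eq_or_lt_of_le hn with h1 | h2
    · simp [← h1, chain]
    · rw [chain_eq h2]
      exact List.mem_cons_of_mem _ (ih _ (Nat.log_lt_self 2 (by omega)) (log2_pos h2))

lemma chain_pre_prefix : ∀ n c : ℕ, 1 ≤ n → c ∈ chain n → pre c <+: pre n := by
  intro n
  induction n using Nat.strong_induction_on with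
  | _ n ih =>
    intro c hn hc
    rcases eq_or_lt_of_le hn with h1 | h2
    · rw [← h1] at hc ⊢
      simp [chain] at hc
      simp [hc]
    · rw [chain_eq h2] at hc
      rcases List.mem_cons.mp hc with h | h
      · simp [h]
      · have := ih _ (Nat.log_lt_self 2 (by omega)) c (log2_pos h2) h
        exact this.trans ⟨bin n, (pre_eq h2).symm⟩

lemma chain_exists_succ : ∀ n c : ℕ, 1 ≤ n → c ∈ chain n → c ≠ n →
    ∃ d, d ∈ chain n ∧ 2 ≤ d ∧ c = Nat.log 2 d := by
  intro n
  induction n using Nat.strong_induction_on with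
  | _ n ih =>
    intro c hn hc hne
    have h2 : 2 ≤ n := by
      by_contra h
      have : n = 1 := by omega
      rw [this] at hc
      simp [chain] at hc
      omega
    rw [chain_eq h2] at hc
    rcases List.mem_cons.mp hc with h | h
    · omega
    · by_cases hcl : c = Nat.log 2 n
      · exact ⟨n, self_mem_chain n, h2, hcl⟩
      · obtain ⟨d, hd1, hd2, hd3⟩ :=
          ih _ (Nat.log_lt_self 2 (by omega)) c (log2_pos h2) h hcl
        exact ⟨d, by rw [chain_eq h2]; exact List.mem_cons_of_mem _ hd1, hd2, hd3⟩

/-! ### decoding determinism -/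

lemma step_unique {t x y : ℕ} (hx : 2 ≤ x) (hy : 2 ≤ y)
    (hsx : IsPrefixOfStream (pre x) t) (hsy : IsPrefixOfStream (pre y) t)
    (hlog : Nat.log 2 x = Nat.log 2 y) : x = y := by
  apply bin_inj (m := x) (n := y)
  have hlx : (bin x).length = Nat.log 2 x + 1 := bin_length x (by omega)
  have hly : (bin y).length = Nat.log 2 y + 1 := bin_length y (by omega)
  have hpl : (pre (Nat.log 2 x)).length = (pre (Nat.log 2 y)).length := by rw [hlog]
  apply List.ext_getElem (by omega)
  intro i hi hi'
  have e1 : (bin x)[i] = Nat.testBit t ((pre (Nat.log 2 x)).length + i) := by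
    have h1 : (pre (Nat.log 2 x)).length + i < (pre x).length := by
      rw [pre_length hx]; omega
    have := stream_getElem hsx _ h1
    rw [List.getElem_of_eq (pre_eq hx) h1] at this
    rw [List.getElem_append_right (by omega)] at this
    simpa using this
  have e2 : (bin y)[i] = Nat.testBit t ((pre (Nat.log 2 y)).length + i) := by
    have h1 : (pre (Nat.log 2 y)).length + i < (pre y).length := by
      rw [pre_length hy]; omega
    have := stream_getElem hsy _ h1
    rw [List.getElem_of_eq (pre_eq hy) h1] at this
    rw [List.getElem_append_right (by omega)] at this
    simpa using this
  rw [e1, e2, hpl]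

lemma absorb {t x y : ℕ} (hx : 2 ≤ x) (hy : 2 ≤ y)
    (hsx : IsPrefixOfStream (pre x) t) (hsy : IsPrefixOfStream (pre y) t)
    (hm : Nat.log 2 x ∈ chain (Nat.log 2 y)) : x ∈ chain y := by
  by_cases heq : Nat.log 2 x = Nat.log 2 y
  · rw [step_unique hx hy hsx hsy heq]
    exact self_mem_chain y
  · obtain ⟨d, hd1, hd2, hd3⟩ := chain_exists_succ _ _ (log2_pos hy) hm heq
    have hpd : pre d <+: pre y :=
      (chain_pre_prefix _ _ (log2_pos hy) hd1).trans ⟨bin y, (pre_eq hy).symm⟩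
    have hsd : IsPrefixOfStream (pre d) t := stream_of_prefix hsy hpd
    have : x = d := step_unique hx hd2 hsx hsd hd3
    rw [chain_eq hy, this]
    exact List.mem_cons_of_mem _ hd1

lemma chain_total : ∀ N x y t : ℕ, x + y ≤ N → 1 ≤ x → 1 ≤ y →
    IsPrefixOfStream (pre x) t → IsPrefixOfStream (pre y) t →
    x ∈ chain y ∨ y ∈ chain x := by
  intro N
  induction N with
  | zero => intro x y t h hx; omega
  | succ N ih =>
    intro x y t hN hx hy hsx hsy
    rcases eq_or_lt_of_le hx with h1 | hx2
    · exact Or.inl (by rw [← h1]; exact one_mem_chain y hy)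
    rcases eq_or_lt_of_le hy with h1 | hy2
    · exact Or.inr (by rw [← h1]; exact one_mem_chain x hx)
    have hx2 : 2 ≤ x := hx2
    have hy2 : 2 ≤ y := hy2
    have hsx' : IsPrefixOfStream (pre (Nat.log 2 x)) t :=
      stream_of_prefix hsx ⟨bin x, (pre_eq hx2).symm⟩
    have hsy' : IsPrefixOfStream (pre (Nat.log 2 y)) t :=
      stream_of_prefix hsy ⟨bin y, (pre_eq hy2).symm⟩
    have hlx : Nat.log 2 x < x := Nat.log_lt_self 2 (by omega)
    have hly : Nat.log 2 y < y := Nat.log_lt_self 2 (by omega)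
    rcases ih (Nat.log 2 x) (Nat.log 2 y) t (by omega) (log2_pos hx2) (log2_pos hy2)
        hsx' hsy' with h | h
    · exact Or.inl (absorb hx2 hy2 hsx hsy h)
    · exact Or.inr (absorb hy2 hx2 hsy hsx h)

lemma code_unique {t x y : ℕ} (hx : 1 ≤ x) (hy : 1 ≤ y)
    (hsx : IsPrefixOfStream (code x) t) (hsy : IsPrefixOfStream (code y) t) : x = y := by
  have hsx' : IsPrefixOfStream (pre x) t := stream_of_prefix hsx ⟨[false], rfl⟩
  have hsy' : IsPrefixOfStream (pre y) t := stream_of_prefix hsy ⟨[false], rfl⟩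
  have key : ∀ u v : ℕ, 1 ≤ u → 1 ≤ v → IsPrefixOfStream (code u) t →
      IsPrefixOfStream (pre v) t → u ∈ chain v → u ≠ v → False := by
    intro u v hu hv hcu hpv hm hne
    obtain ⟨d, hd1, hd2, hd3⟩ := chain_exists_succ _ _ hv hm hne
    have hsd : IsPrefixOfStream (pre d) t :=
      stream_of_prefix hpv (chain_pre_prefix _ _ hv hd1)
    -- bit at position (pre u).length is true (start of bin d) but false (end of code u)
    have hbd : 0 < (bin d).length := bin_pos d (by omega)
    have hlen : (pre u).length < (pre d).length := by rw [pre_length hd2, ← hd3]; omega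
    have htrue : Nat.testBit t (pre u).length = true := by
      have h1 : (pre u).length < (pre d).length := hlen
      have := stream_getElem hsd _ h1
      rw [List.getElem_of_eq (show pre d = pre u ++ bin d by rw [pre_eq hd2, ← hd3]) h1] at this
      rw [List.getElem_append_right (le_refl _)] at this
      rw [← this]
      simpa using bin_head d (by omega) hbd
    have hfalse : Nat.testBit t (pre u).length = false := by
      have h1 : (pre u).length < (code u).length := by simp [code]
      have := stream_getElem hcu _ h1
      rw [List.getElem_of_eq (show code u = pre u ++ [false] from rfl) h1] at this
      rw [List.getElem_append_right (le_refl _)] at this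
      rw [← this]
      simp
    rw [htrue] at hfalse
    exact absurd hfalse (by simp)
  rcases chain_total (x + y) x y t le_rfl hx hy hsx' hsy' with h | h
  · by_contra hne
    exact key x y hx hy hsx hsy' h hne
  · by_contra hne
    exact (key y x hy hx hsy hsx' h (fun e => hne e.symm))

/-! ### characterization of a -/

lemma a_eq_iff {a : ℕ → ℕ} (ha_pos : ∀ t, 0 < a t)
    (ha : ∀ t, IsPrefixOfStream (code (a t)) t) {k : ℕ} (hk : 0 < k) (t : ℕ) :
    a t = k ↔ IsPrefixOfStream (code k) t := by
  constructor
  · rintro rfl; exact ha t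
  · intro h
    exact code_unique (ha_pos t) hk (ha t) h

/-! ### periodicity -/

lemma stream_iff_mod (l : List Bool) (t s : ℕ)
    (h : t % 2 ^ l.length = s % 2 ^ l.length) :
    IsPrefixOfStream l t ↔ IsPrefixOfStream l s := by
  have key : ∀ i, i < l.length → Nat.testBit t i = Nat.testBit s i := by
    intro i hi
    have ht := Nat.testBit_mod_two_pow t l.length i
    have hs := Nat.testBit_mod_two_pow s l.length i
    rw [h, hs] at ht
    simpa [hi] using ht.symm
  constructor <;> (intro hp i hi; rw [List.get_eq_getElem] at *)
  · rw [← key i hi]; exact stream_getElem hp i hi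
  · rw [key i hi]; exact stream_getElem hp i hi

/-! ### value whose low bits are a given list -/

def natOf : List Bool → ℕ
  | [] => 0
  | b :: l => (cond b 1 0) + 2 * natOf l

lemma natOf_testBit : ∀ (l : List Bool) (i : ℕ) (h : i < l.length),
    (natOf l).testBit i = l[i] := by
  intro l
  induction l with
  | nil => intro i h; simp at h
  | cons b l ih =>
    intro i h
    match i with
    | 0 =>
      rw [Nat.testBit_zero]
      cases b <;> simp [natOf, Nat.add_mul_mod_self_left, Nat.mul_mod_right] <;> omega
    | i + 1 =>
      rw [Nat.testBit_succ]
      have : (natOf (b :: l)) / 2 = natOf l := by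
        cases b <;> simp [natOf] <;> omega
      rw [this]
      simpa using ih i (by simpa using h)


lemma testBit_eq_of_mod {t s n i : ℕ} (h : t % 2 ^ n = s % 2 ^ n) (hi : i < n) :
    Nat.testBit t i = Nat.testBit s i := by
  have ht := Nat.testBit_mod_two_pow t n i
  have hs := Nat.testBit_mod_two_pow s n i
  rw [h, hs] at ht
  simpa [hi] using ht.symm

lemma code_length_mono {m n : ℕ} (hm : 1 ≤ m) (hmn : m ≤ n) :
    (code m).length ≤ (code n).length := by
  simp only [code, List.length_append, List.length_singleton]
  have := pre_length_mono m n hm hmn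
  omega

theorem stmt13 (a : ℕ → ℕ) (ha_pos : ∀ t, 0 < a t)
    (ha : ∀ t, IsPrefixOfStream (code (a t)) t) :
    ∀ k : ℕ, 0 < k →
      ((∀ t : ℕ, a t = k ↔ a (t + 2 ^ (code k).length) = k) ∧
        (∀ lo : ℕ, ∀ k' : ℕ, 1 ≤ k' → k' ≤ k →
          ∃ t ∈ Finset.Ico lo (lo + 2 ^ (code k).length), a t = k')) := by
  intro k hk
  constructor
  · intro t
    rw [a_eq_iff ha_pos ha hk, a_eq_iff ha_pos ha hk]
    exact stream_iff_mod _ _ _ (by rw [Nat.add_mod_right])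
  · intro lo k' hk' hk'k
    set L := (code k).length with hL
    set L' := (code k').length with hL'
    have hLL : L' ≤ L := code_length_mono hk' hk'k
    set P := 2 ^ L' with hP
    have hPpos : 0 < P := Nat.two_pow_pos _
    set r := natOf (code k') with hr
    set t := lo + (r + (P - lo % P)) % P with ht
    have hmod : lo % P < P := Nat.mod_lt _ hPpos
    have htmod : t % P = r % P := by
      rw [ht, Nat.add_mod_mod]
      have he : lo + (r + (P - lo % P)) = r + P + P * (lo / P) := by
        have := Nat.mod_add_div lo P
        omega
      rw [he, Nat.add_mul_mod_self_left, Nat.add_mod_right]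
    have hstream : IsPrefixOfStream (code k') t := by
      intro i hi
      rw [List.get_eq_getElem, ← natOf_testBit _ i hi]
      exact (testBit_eq_of_mod htmod hi).symm
    refine ⟨t, ?_, (a_eq_iff ha_pos ha (by omega : 0 < k') t).mpr hstream⟩
    rw [Finset.mem_Ico]
    constructor
    · omega
    · have h1 : (r + (P - lo % P)) % P < P := Nat.mod_lt _ hPpos
      have h2 : P ≤ 2 ^ L := Nat.pow_le_pow_right (by norm_num) hLL
      omega
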